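/- Let $M$ be a $2d$-dimensional symplectic space over $\mathbb{F}_q$ ($q$ odd), $V \subset M$ isotropic, $L$ a lagrangian with $L \cap V = 0$, $M_0 = V^\perp/V$, $L_V = (L \cap V^\perp)$ viewed in $M_0$. Given $f \in \mathcal{H}_{L_V}$ (functions on $H_0$ left-equivariant against $(\bar L_V, \chi_{L_V})$), define $f \circ \alpha_V$ on $H^V = V^\perp \times \mathbb{F}_q$. Then there is a unique function $f_1 \in \mathcal{H}_L$ on $H$ with $f_1(m) = q^{\dim V} (f\circ\alpha_V)(m)$ for all $m \in H^V$; uniqueness uses $V^\perp + L = M$. -/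

import Mathlib

/-!
STATEMENT 15.  `M` a `2d`-dimensional symplectic space over `𝔽_q` (`q` odd),
`V ⊂ M` isotropic, `L` lagrangian with `L ∩ V = 0`, `M₀ = V^⊥/V` with induced
form `ω₀`, `L_V` the image of `L ∩ V^⊥` in `M₀`.  Given `f ∈ 𝓗_{L_V}` (a
function on `H₀ = M₀ × k`, `(L̄_V, χ_{L_V})`-equivariant on the left), there
is a unique `f₁ ∈ 𝓗_L` on `H = M × k` with
`f₁(m) = q^{dim V} (f ∘ α_V)(m)` for all `m ∈ H^V = V^⊥ × k`.
-/

/-- Heisenberg group multiplication on `M × k`. -/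
def Hmul {k M : Type*} [Field k] [AddCommGroup M] [Module k M]
    (ω : M →ₗ[k] M →ₗ[k] k) (h₁ h₂ : M × k) : M × k :=
  (h₁.1 + h₂.1, h₁.2 + h₂.2 + 2⁻¹ * ω h₁.1 h₂.1)

theorem statement15 {k M : Type*} [Field k] [Fintype k]
    [AddCommGroup M] [Module k M] [FiniteDimensional k M] [Fintype M]
    (hchar : ringChar k ≠ 2) (d : ℕ)
    (hdim : Module.finrank k M = 2 * d)
    (ω : M →ₗ[k] M →ₗ[k] k)
    (halt : ∀ m : M, ω m m = 0)
    (hnd : ∀ m : M, (∀ m' : M, ω m m' = 0) → m = 0)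
    (ψ : AddChar k ℂ) (hψ : ∃ a : k, ψ a ≠ 1)
    (V L : Submodule k M)
    (hViso : ∀ x ∈ V, ∀ y ∈ V, ω x y = 0)
    (hL : LinearMap.BilinForm.orthogonal ω L = L)
    (hLV : L ⊓ V = ⊥)
    (Vp : Submodule k M) (hVp : Vp = LinearMap.BilinForm.orthogonal ω V)
    (V' : Submodule k ↥Vp) (hV' : V' = Submodule.comap Vp.subtype V)
    (ω₀ : (↥Vp ⧸ V') →ₗ[k] (↥Vp ⧸ V') →ₗ[k] k)
    (hω₀ : ∀ x y : ↥Vp,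
      ω₀ (Submodule.Quotient.mk x) (Submodule.Quotient.mk y) = ω ↑x ↑y)
    (f : ((↥Vp ⧸ V') × k) → ℂ)
    -- `f ∈ 𝓗_{L_V}`, where `L_V` is the image of `L ∩ V^⊥` in `M₀`
    (hf : ∀ l ∈ Submodule.map (Submodule.mkQ V') (Submodule.comap Vp.subtype L),
      ∀ a : k, ∀ h : (↥Vp ⧸ V') × k,
        f (Hmul ω₀ (l, a) h) = ψ a * f h) :
    ∃! f₁ : (M × k) → ℂ,
      (∀ l ∈ L, ∀ a : k, ∀ h : M × k, f₁ (Hmul ω (l, a) h) = ψ a * f₁ h)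
      ∧ ∀ (v : ↥Vp) (a : k),
          f₁ ((v : M), a)
            = (Fintype.card k : ℂ) ^ (Module.finrank k ↥V) *
                f ((Submodule.Quotient.mk v : ↥Vp ⧸ V'), a) := by
  classical
  set C : ℂ := (Fintype.card k : ℂ) ^ (Module.finrank k ↥V) with hCdef
  have href : LinearMap.IsRefl ω := LinearMap.IsAlt.isRefl halt
  have hndeg : LinearMap.BilinForm.Nondegenerate (ω : LinearMap.BilinForm k M) := href.nondegenerate_iff_separatingLeft.mpr hnd
  -- L is isotropic
  have hLiso : ∀ x ∈ L, ∀ y ∈ L, ω x y = 0 := by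
    intro x hx y hy
    rw [← hL] at hy
    exact hy x hx
  -- double orthogonal of V
  have hVpV : LinearMap.BilinForm.orthogonal ω Vp = V := by
    rw [hVp, LinearMap.BilinForm.orthogonal_orthogonal hndeg href]
  -- L ⊔ Vp = ⊤
  have hsum : L ⊔ Vp = ⊤ := by
    have hbot : LinearMap.BilinForm.orthogonal ω (L ⊔ Vp) = ⊥ := by
      rw [eq_bot_iff]
      intro x hx
      have hxL : x ∈ L := by
        rw [← hL]
        intro n hn
        exact hx n (Submodule.mem_sup_left hn)
      have hxV : x ∈ V := by
        rw [← hVpV]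
        intro n hn
        exact hx n (Submodule.mem_sup_right hn)
      have hmem : x ∈ L ⊓ V := ⟨hxL, hxV⟩
      rw [hLV] at hmem
      exact hmem
    have h2 := congrArg (LinearMap.BilinForm.orthogonal ω) hbot
    rw [LinearMap.BilinForm.orthogonal_orthogonal hndeg href] at h2
    rw [h2, eq_top_iff]
    intro x _ n hn
    rw [Submodule.mem_bot] at hn
    subst hn
    simp [LinearMap.BilinForm.IsOrtho]
  -- central equivariance of f
  have hcen : ∀ (x : ↥Vp ⧸ V') (b c : k), f (x, b + c) = ψ b * f (x, c) := by
    intro x b c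
    have h0 : (0 : ↥Vp ⧸ V') ∈ Submodule.map (Submodule.mkQ V')
        (Submodule.comap Vp.subtype L) := Submodule.zero_mem _
    have := hf 0 h0 b (x, c)
    simpa [Hmul, add_assoc] using this
  -- equivariance of f under (L ∩ Vp)
  have hLVeq : ∀ (l₀ : ↥Vp), (l₀ : M) ∈ L → ∀ (v : ↥Vp) (c : k),
      f (Submodule.Quotient.mk (l₀ + v), c + 2⁻¹ * ω (l₀ : M) (v : M))
        = f (Submodule.Quotient.mk v, c) := by
    intro l₀ hl₀ v c
    have hmem : (Submodule.Quotient.mk l₀ : ↥Vp ⧸ V') ∈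
        Submodule.map (Submodule.mkQ V') (Submodule.comap Vp.subtype L) :=
      ⟨l₀, hl₀, rfl⟩
    have h := hf _ hmem 0 (Submodule.Quotient.mk v, c)
    rw [AddChar.map_zero_eq_one, one_mul] at h
    rw [← h]
    congr 1
    simp only [Hmul]
    refine Prod.ext ?_ ?_
    · rw [← Submodule.Quotient.mk_add]
    · rw [hω₀, zero_add]
  -- decomposition of any m : M
  have hdec : ∀ m : M, ∃ p : M × ↥Vp, p.1 ∈ L ∧ p.1 + (p.2 : M) = m := by
    intro m
    have hm : m ∈ L ⊔ Vp := by rw [hsum]; exact Submodule.mem_top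
    obtain ⟨l, hl, v, hv, hlv⟩ := Submodule.mem_sup.mp hm
    exact ⟨(l, ⟨v, hv⟩), hl, hlv⟩
  choose dec hdecL hdecEq using hdec
  -- well-definedness across decompositions
  have hwd : ∀ (l₁ l₂ : M) (v₁ v₂ : ↥Vp), l₁ ∈ L → l₂ ∈ L →
      l₁ + (v₁ : M) = l₂ + (v₂ : M) → ∀ a : k,
      f (Submodule.Quotient.mk v₁, a - 2⁻¹ * ω l₁ (v₁ : M))
        = f (Submodule.Quotient.mk v₂, a - 2⁻¹ * ω l₂ (v₂ : M)) := by
    intro l₁ l₂ v₁ v₂ hl₁ hl₂ heq a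
    set δ : ↥Vp := v₁ - v₂ with hδ
    have hδM : (δ : M) = l₂ - l₁ := by
      have h1 : (δ : M) = (v₁ : M) - (v₂ : M) := rfl
      rw [h1, sub_eq_sub_iff_add_eq_add, add_comm]
      exact heq
    have hδL : (δ : M) ∈ L := by rw [hδM]; exact L.sub_mem hl₂ hl₁
    have hδv : δ + v₂ = v₁ := by rw [hδ]; abel
    have e1 : ω (δ : M) (v₂ : M) = ω l₂ (v₂ : M) - ω l₁ (v₂ : M) := by
      rw [hδM, map_sub, LinearMap.sub_apply]
    have e2 : ω l₁ (v₁ : M) = ω l₁ (v₂ : M) := by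
      have hv1 : (v₁ : M) = (l₂ - l₁) + (v₂ : M) := by
        rw [← hδM, ← hδv]; rfl
      rw [hv1, map_add, map_sub, hLiso l₁ hl₁ l₂ hl₂, halt]
      ring
    have H := hLVeq δ hδL v₂ (a - 2⁻¹ * ω l₂ (v₂ : M))
    rw [hδv] at H
    have harg : a - 2⁻¹ * ω l₁ (v₁ : M)
        = a - 2⁻¹ * ω l₂ (v₂ : M) + 2⁻¹ * ω (δ : M) (v₂ : M) := by
      rw [e1, e2]; ring
    rw [harg]
    exact H
  -- the candidate function
  set f₁ : (M × k) → ℂ := fun p =>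
    C * f (Submodule.Quotient.mk (dec p.1).2,
      p.2 - 2⁻¹ * ω (dec p.1).1 (((dec p.1).2 : ↥Vp) : M)) with hf₁def
  have hval : ∀ (v : ↥Vp) (a : k),
      f₁ ((v : M), a) = C * f ((Submodule.Quotient.mk v : ↥Vp ⧸ V'), a) := by
    intro v a
    have h := hwd (dec (v : M)).1 0 (dec (v : M)).2 v (hdecL _) (Submodule.zero_mem L)
      (by rw [hdecEq, zero_add]) a
    simp only [map_zero, LinearMap.zero_apply, mul_zero, sub_zero] at h
    simp only [hf₁def]
    rw [h]
  have hequiv : ∀ l ∈ L, ∀ a : k, ∀ h : M × k,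
      f₁ (Hmul ω (l, a) h) = ψ a * f₁ h := by
    intro l hl a h
    set lm : M := (dec h.1).1 with hlm
    set vm : ↥Vp := (dec h.1).2 with hvm
    have hlmL : lm ∈ L := hdecL _
    have hne : (l + lm) + (vm : M) = l + h.1 := by
      rw [add_assoc, hdecEq]
    have hwd' := hwd (dec (l + h.1)).1 (l + lm) (dec (l + h.1)).2 vm (hdecL _)
      (L.add_mem hl hlmL) ((hdecEq _).trans hne.symm)
      (a + h.2 + 2⁻¹ * ω l h.1)
    have homega : ω l h.1 = ω l (vm : M) := by
      conv_lhs => rw [← hdecEq h.1]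
      rw [map_add, hLiso l hl lm hlmL, zero_add]
    have harg : a + h.2 + 2⁻¹ * ω l h.1 - 2⁻¹ * ω (l + lm) (vm : M)
        = a + (h.2 - 2⁻¹ * ω lm (vm : M)) := by
      rw [homega, map_add, LinearMap.add_apply]
      ring
    simp only [hf₁def, Hmul]
    rw [hwd', harg, hcen]
    ring
  refine ⟨f₁, ⟨hequiv, hval⟩, ?_⟩
  intro g hg
  obtain ⟨Hg, Hv⟩ := hg
  funext p
  have hsplit : p = Hmul ω ((dec p.1).1, 0)
      ((((dec p.1).2 : ↥Vp) : M), p.2 - 2⁻¹ * ω (dec p.1).1 (((dec p.1).2 : ↥Vp) : M)) := by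
    refine Prod.ext ?_ ?_
    · simp only [Hmul]
      exact (hdecEq p.1).symm
    · simp only [Hmul]
      ring
  calc g p = g (Hmul ω ((dec p.1).1, 0)
        ((((dec p.1).2 : ↥Vp) : M), p.2 - 2⁻¹ * ω (dec p.1).1 (((dec p.1).2 : ↥Vp) : M))) := by
        rw [← hsplit]
    _ = ψ 0 * g ((((dec p.1).2 : ↥Vp) : M),
          p.2 - 2⁻¹ * ω (dec p.1).1 (((dec p.1).2 : ↥Vp) : M)) := Hg _ (hdecL _) _ _
    _ = f₁ p := by
        rw [AddChar.map_zero_eq_one, one_mul, Hv]
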